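/- Let ℓ ≥ 1, 1 ≤ i ≤ ℓ, and 0 ≤ s ≤ ℓ. Then p_{i|s} ≤ 2·(2/3)^{i−s−1}. -/

import Mathlib

open scoped Classical

noncomputable section

/-- `E_j`: the span of the first `j` standard basis vectors of `F₂^ℓ`. -/
def Ej (ℓ j : ℕ) : Submodule (ZMod 2) (Fin ℓ → ZMod 2) :=
  Submodule.span (ZMod 2) {v | ∃ k : Fin ℓ, (k : ℕ) < j ∧ v = Pi.single k 1}

/-- The average conditional erasure probability `p_{i|s}` (with `i` 1-indexed): the fraction
of `(ℓ-s)`-dimensional subspaces `R` of `F₂^ℓ` with `R ∩ (E_i \ E_{i-1}) = ∅`. -/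
def pis (ℓ i s : ℕ) : ℝ :=
  (Nat.card {R : Submodule (ZMod 2) (Fin ℓ → ZMod 2) //
      Module.finrank (ZMod 2) ↥R = ℓ - s ∧
      (R : Set (Fin ℓ → ZMod 2)) ∩ ((Ej ℓ i : Set (Fin ℓ → ZMod 2)) \
        (Ej ℓ (i - 1) : Set (Fin ℓ → ZMod 2))) = ∅} : ℝ) /
  (Nat.card {R : Submodule (ZMod 2) (Fin ℓ → ZMod 2) //
      Module.finrank (ZMod 2) ↥R = ℓ - s} : ℝ)

/-- The 2-Gaussian binomial coefficient `[a choose t]₂`, as a real number. -/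
def gaussBinom (a t : ℕ) : ℝ :=
  ∏ j ∈ Finset.range t, ((2 ^ a - 2 ^ j : ℝ) / (2 ^ t - 2 ^ j : ℝ))

/-- The average erasure probability `F_i(z)` of the `i`-th bit-channel (`i` 1-indexed). -/
def Favg (ℓ i : ℕ) (z : ℝ) : ℝ :=
  ∑ s ∈ Finset.range (ℓ + 1), (Nat.choose ℓ s : ℝ) * z ^ s * (1 - z) ^ (ℓ - s) * pis ℓ i s

namespace Stmt14Aux


open Submodule Module Set

abbrev F2 := ZMod 2


instance finiteSubmodule (ℓ : ℕ) : Finite (Submodule F2 (Fin ℓ → F2)) :=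
  Finite.of_injective (fun R => (R : Set (Fin ℓ → F2))) SetLike.coe_injective

/-- dot-product functional. -/
def phi {ℓ : ℕ} (c : Fin ℓ → F2) : (Fin ℓ → F2) →ₗ[F2] F2 where
  toFun v := ∑ j, c j * v j
  map_add' x y := by simp [mul_add, Finset.sum_add_distrib]
  map_smul' a x := by simp [Finset.mul_sum, mul_left_comm]

lemma phi_apply {ℓ : ℕ} (c v : Fin ℓ → F2) : phi c v = ∑ j, c j * v j := rfl

lemma phi_single {ℓ : ℕ} (c : Fin ℓ → F2) (j : Fin ℓ) : phi c (Pi.single j 1) = c j := by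
  rw [phi_apply]
  rw [Finset.sum_eq_single j]
  · simp
  · intro k _ hk
    simp [Pi.single_eq_of_ne hk]
  · simp

lemma pi_single_sum {ℓ : ℕ} (v : Fin ℓ → F2) : v = ∑ j, v j • Pi.single j (1 : F2) := by
  ext k
  simp [Pi.single_apply, Finset.sum_apply]

lemma phi_eq_dual {ℓ : ℕ} (φ : Module.Dual F2 (Fin ℓ → F2)) (v : Fin ℓ → F2) :
    phi (fun j => φ (Pi.single j 1)) v = φ v := by
  conv_rhs => rw [pi_single_sum v, map_sum]
  rw [phi_apply]
  refine Finset.sum_congr rfl fun j _ => ?_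
  rw [map_smul, smul_eq_mul, mul_comm]



lemma Ej_apply_eq_zero {ℓ m : ℕ} {x : Fin ℓ → F2} (hx : x ∈ Ej ℓ m) {j : Fin ℓ}
    (hj : m ≤ (j : ℕ)) : x j = 0 := by
  have hle : Ej ℓ m ≤ LinearMap.ker (LinearMap.proj j : (Fin ℓ → F2) →ₗ[F2] F2) := by
    rw [Ej, Submodule.span_le]
    rintro v ⟨k, hk, rfl⟩
    simp only [SetLike.mem_coe, LinearMap.mem_ker, LinearMap.proj_apply]
    refine Pi.single_eq_of_ne ?_ 1
    intro h
    rw [h] at hj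
    omega
  exact hle hx

lemma single_mem_Ej {ℓ m : ℕ} {j : Fin ℓ} (hj : (j : ℕ) < m) :
    Pi.single j (1 : F2) ∈ Ej ℓ m :=
  Submodule.subset_span ⟨j, hj, rfl⟩

lemma Ej_mono {ℓ : ℕ} {m m' : ℕ} (h : m ≤ m') : Ej ℓ m ≤ Ej ℓ m' := by
  apply Submodule.span_mono
  rintro v ⟨k, hk, rfl⟩
  exact ⟨k, lt_of_lt_of_le hk h, rfl⟩

lemma single_linearIndependent (ℓ : ℕ) :
    LinearIndependent F2 (fun j : Fin ℓ => Pi.single j (1 : F2)) := by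
  have h := (Pi.basisFun F2 (Fin ℓ)).linearIndependent
  have he : ⇑(Pi.basisFun F2 (Fin ℓ)) = fun j : Fin ℓ => Pi.single j (1 : F2) := by
    funext j
    exact Pi.basisFun_apply F2 (Fin ℓ) j
  rwa [he] at h

lemma finrank_Ej {ℓ m : ℕ} (hm : m ≤ ℓ) : Module.finrank F2 (Ej ℓ m) = m := by
  have hset : {v | ∃ k : Fin ℓ, (k : ℕ) < m ∧ v = Pi.single k 1} =
      Set.range (fun k : Fin m => (Pi.single (Fin.castLE hm k) 1 : Fin ℓ → F2)) := by
    ext v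
    constructor
    · rintro ⟨k, hk, rfl⟩
      exact ⟨⟨(k : ℕ), hk⟩, by congr 1⟩
    · rintro ⟨k, rfl⟩
      exact ⟨Fin.castLE hm k, by simpa using k.2, rfl⟩
  have hLI : LinearIndependent F2
      ((fun j : Fin ℓ => Pi.single j (1 : F2)) ∘ Fin.castLE hm) :=
    (single_linearIndependent ℓ).comp _ (Fin.castLE_injective hm)
  rw [Ej, hset]
  have := finrank_span_eq_card (R := F2) hLI
  simpa [Function.comp_def] using this




/-- number of ordered bases of an `r`-dimensional `F2`-space. -/
def B (r : ℕ) : ℕ :=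
  Nat.card {g : Fin r → (Fin r → F2) //
    LinearIndependent F2 g ∧ Submodule.span F2 (Set.range g) = ⊤}

lemma B_pos (r : ℕ) : 0 < B r := by
  have : Nonempty {g : Fin r → (Fin r → F2) //
      LinearIndependent F2 g ∧ Submodule.span F2 (Set.range g) = ⊤} :=
    ⟨⟨⇑(Pi.basisFun F2 (Fin r)), (Pi.basisFun F2 (Fin r)).linearIndependent,
      (Pi.basisFun F2 (Fin r)).span_eq⟩⟩
  exact Nat.card_pos

lemma card_bases {ℓ : ℕ} (r : ℕ) (R : Submodule F2 (Fin ℓ → F2))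
    (hR : Module.finrank F2 R = r) :
    Nat.card {b : Fin r → (Fin ℓ → F2) //
      LinearIndependent F2 b ∧ Submodule.span F2 (Set.range b) = R} = B r := by
  symm
  apply Nat.card_congr
  have hfr : Module.finrank F2 (Fin r → F2) = Module.finrank F2 R := by
    rw [Module.finrank_fin_fun, hR]
  set e : (Fin r → F2) ≃ₗ[F2] R := LinearEquiv.ofFinrankEq _ _ hfr with he_def
  set f : (Fin r → F2) →ₗ[F2] (Fin ℓ → F2) := R.subtype.comp e.toLinearMap with hf_def
  have hker : LinearMap.ker f = ⊥ := by
    rw [hf_def, LinearMap.ker_comp, Submodule.ker_subtype, Submodule.comap_bot,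
      LinearEquiv.ker]
  have hrange : LinearMap.range f = R := by
    rw [hf_def, LinearMap.range_comp, LinearEquiv.range, Submodule.map_top,
      Submodule.range_subtype]
  -- forward property proofs
  have hfwdLI : ∀ g : {g : Fin r → (Fin r → F2) //
      LinearIndependent F2 g ∧ Submodule.span F2 (Set.range g) = ⊤},
      LinearIndependent F2 (f ∘ g.1) := fun g => g.2.1.map' f hker
  have hfwdSpan : ∀ g : {g : Fin r → (Fin r → F2) //
      LinearIndependent F2 g ∧ Submodule.span F2 (Set.range g) = ⊤},
      Submodule.span F2 (Set.range (f ∘ g.1)) = R := by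
    intro g
    rw [Set.range_comp, ← Submodule.map_span, g.2.2, Submodule.map_top, hrange]
  -- backward data
  have hmem : ∀ (b : {b : Fin r → (Fin ℓ → F2) //
      LinearIndependent F2 b ∧ Submodule.span F2 (Set.range b) = R}) (k : Fin r),
      b.1 k ∈ R := by
    intro b k
    have h := Submodule.subset_span (R := F2) (Set.mem_range_self (f := b.1) k)
    rwa [b.2.2] at h
  refine
    { toFun := fun g => ⟨f ∘ g.1, hfwdLI g, hfwdSpan g⟩
      invFun := fun b => ⟨fun k => e.symm ⟨b.1 k, hmem b k⟩, ?_, ?_⟩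
      left_inv := ?_
      right_inv := ?_ }
  · -- linear independence of the pulled-back family
    have hbt : LinearIndependent F2 (fun k => (⟨b.1 k, hmem b k⟩ : R)) :=
      b.2.1.of_comp R.subtype
    exact hbt.map' e.symm.toLinearMap (LinearEquiv.ker _)
  · -- span = ⊤
    have h1 : Submodule.span F2 (Set.range (fun k => (⟨b.1 k, hmem b k⟩ : R))) = ⊤ := by
      apply Submodule.map_injective_of_injective (Submodule.injective_subtype R)
      rw [Submodule.map_span, ← Set.range_comp, Submodule.map_top, Submodule.range_subtype]
      have h2 : ⇑R.subtype ∘ (fun k => (⟨b.1 k, hmem b k⟩ : R)) = b.1 := by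
        funext k; rfl
      rw [h2, b.2.2]
    have h3 : (fun k => e.symm ⟨b.1 k, hmem b k⟩) =
        ⇑e.symm.toLinearMap ∘ (fun k => (⟨b.1 k, hmem b k⟩ : R)) := rfl
    rw [h3, Set.range_comp, ← Submodule.map_span, h1, Submodule.map_top, LinearEquiv.range]
  · intro g
    apply Subtype.ext
    funext k
    show e.symm ⟨(⇑f ∘ g.1) k, _⟩ = g.1 k
    apply e.injective
    rw [LinearEquiv.apply_symm_apply]
    apply Subtype.ext
    rfl
  · intro b
    apply Subtype.ext
    funext k
    show f (e.symm ⟨b.1 k, hmem b k⟩) = b.1 k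
    rw [hf_def]
    simp only [LinearMap.coe_comp, Function.comp_apply, Submodule.coe_subtype,
      LinearEquiv.coe_coe]
    rw [LinearEquiv.apply_symm_apply]

lemma card_eq_mul {ℓ : ℕ} (r : ℕ) (P : Submodule F2 (Fin ℓ → F2) → Prop) :
    Nat.card {b : Fin r → (Fin ℓ → F2) //
      LinearIndependent F2 b ∧ P (Submodule.span F2 (Set.range b))}
    = Nat.card {R : Submodule F2 (Fin ℓ → F2) //
        Module.finrank F2 R = r ∧ P R} * B r := by
  set α := {b : Fin r → (Fin ℓ → F2) //
    LinearIndependent F2 b ∧ P (Submodule.span F2 (Set.range b))} with hα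
  set β := {R : Submodule F2 (Fin ℓ → F2) // Module.finrank F2 R = r ∧ P R} with hβ
  have hfr : ∀ a : α, Module.finrank F2 (Submodule.span F2 (Set.range a.1)) = r := by
    intro a
    rw [finrank_span_eq_card a.2.1, Fintype.card_fin]
  let fib : α → β := fun a => ⟨Submodule.span F2 (Set.range a.1), hfr a, a.2.2⟩
  have fibEquiv : ∀ Rb : β, {a : α // fib a = Rb} ≃
      {b : Fin r → (Fin ℓ → F2) //
        LinearIndependent F2 b ∧ Submodule.span F2 (Set.range b) = Rb.1} := by
    intro Rb
    refine
      { toFun := fun a => ⟨a.1.1, a.1.2.1, congrArg Subtype.val a.2⟩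
        invFun := fun b => ⟨⟨b.1, b.2.1, by rw [b.2.2]; exact Rb.2.2⟩, Subtype.ext b.2.2⟩
        left_inv := fun a => Subtype.ext (Subtype.ext rfl)
        right_inv := fun b => Subtype.ext rfl }
  have fibCard : ∀ Rb : β, Nat.card {a : α // fib a = Rb} = B r := by
    intro Rb
    rw [Nat.card_congr (fibEquiv Rb)]
    exact card_bases r Rb.1 Rb.2.1
  have hfin : Finite β := by infer_instance
  have : Fintype β := Fintype.ofFinite β
  have : ∀ Rb : β, Fintype {a : α // fib a = Rb} := fun Rb => Fintype.ofFinite _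
  calc Nat.card α = Nat.card (Σ Rb : β, {a : α // fib a = Rb}) :=
        Nat.card_congr (Equiv.sigmaFiberEquiv fib).symm
    _ = ∑ Rb : β, Nat.card {a : α // fib a = Rb} := by
        rw [Nat.card_eq_fintype_card, Fintype.card_sigma]
        exact Finset.sum_congr rfl fun Rb _ => (Nat.card_eq_fintype_card).symm
    _ = ∑ _Rb : β, B r := Finset.sum_congr rfl fun Rb _ => fibCard Rb
    _ = Nat.card β * B r := by
        rw [Finset.sum_const, Finset.card_univ, smul_eq_mul, Nat.card_eq_fintype_card]


lemma exists_c {ℓ i : ℕ} (hi : 1 ≤ i) (hiℓ : i ≤ ℓ) (R : Submodule F2 (Fin ℓ → F2))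
    (hav : (R : Set (Fin ℓ → F2)) ∩ ((Ej ℓ i : Set (Fin ℓ → F2)) \
      (Ej ℓ (i - 1) : Set (Fin ℓ → F2))) = ∅) :
    ∃ c : Fin ℓ → F2, (∀ j : Fin ℓ, (j : ℕ) < i - 1 → c j = 0) ∧
      c ⟨i - 1, by omega⟩ = 1 ∧ ∀ v ∈ R, phi c v = 0 := by
  set i0 : Fin ℓ := ⟨i - 1, by omega⟩ with hi0
  set W := R ⊔ Ej ℓ (i - 1) with hW
  have hnm : Pi.single i0 (1 : F2) ∉ W := by
    intro hmem
    rw [hW, Submodule.mem_sup] at hmem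
    obtain ⟨v, hv, w, hw, hvw⟩ := hmem
    have hvEi : v ∈ Ej ℓ i := by
      have h1 : Pi.single i0 (1 : F2) ∈ Ej ℓ i := single_mem_Ej (by simp [hi0]; omega)
      have h2 : w ∈ Ej ℓ i := Ej_mono (by omega) hw
      have h3 : v = Pi.single i0 (1 : F2) - w := by
        rw [← hvw]; abel
      rw [h3]; exact sub_mem h1 h2
    have hvnot : v ∉ Ej ℓ (i - 1) := by
      intro hvm
      have h4 : Pi.single i0 (1 : F2) ∈ Ej ℓ (i - 1) := by
        rw [← hvw]; exact add_mem hvm hw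
      have h5 := Ej_apply_eq_zero h4 (j := i0) (by simp [hi0])
      rw [Pi.single_eq_same] at h5
      exact one_ne_zero h5
    have h6 : v ∈ (R : Set (Fin ℓ → F2)) ∩ ((Ej ℓ i : Set (Fin ℓ → F2)) \
        (Ej ℓ (i - 1) : Set (Fin ℓ → F2))) := ⟨hv, hvEi, hvnot⟩
    rw [hav] at h6
    exact h6
  obtain ⟨φ, hφ1, hφ2⟩ := Submodule.exists_dual_map_eq_bot_of_notMem hnm inferInstance
  have hWker : ∀ x ∈ W, φ x = 0 := by
    intro x hx
    have hm : φ x ∈ W.map φ := Submodule.mem_map_of_mem hx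
    rw [hφ2] at hm
    exact (Submodule.mem_bot F2).mp hm
  have hone : φ (Pi.single i0 1) = 1 := by
    revert hφ1
    generalize φ (Pi.single i0 1) = a
    revert a
    decide
  refine ⟨fun j => φ (Pi.single j 1), ?_, hone, ?_⟩
  · intro j hj
    exact hWker _ (Submodule.mem_sup_right (single_mem_Ej hj))
  · intro v hv
    rw [phi_eq_dual]
    exact hWker v (Submodule.mem_sup_left hv)

lemma card_fun_r (r : ℕ) : Nat.card (Fin r → F2) = 2 ^ r := by
  rw [Nat.card_eq_fintype_card, Fintype.card_fun, ZMod.card 2, Fintype.card_fin]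

lemma inj_card {ℓ : ℕ} (r : ℕ) (c : Fin ℓ → F2) (i0 : Fin ℓ) (hc : c i0 = 1) :
    Nat.card {b : Fin r → (Fin ℓ → F2) //
      LinearIndependent F2 b ∧ ∀ k, phi c (b k) = 0} * 2 ^ r ≤
    Nat.card {b : Fin r → (Fin ℓ → F2) // LinearIndependent F2 b} := by
  classical
  set v0 : Fin ℓ → F2 := Pi.single i0 1 with hv0
  have hphiv0 : phi c v0 = 1 := by rw [hv0, phi_single, hc]
  set α := {b : Fin r → (Fin ℓ → F2) //
    LinearIndependent F2 b ∧ ∀ k, phi c (b k) = 0} with hα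
  have hLI : ∀ (p : α × (Fin r → F2)),
      LinearIndependent F2 (fun k => p.1.1 k + p.2 k • v0) := by
    rintro ⟨⟨b, hbLI, hbkill⟩, w⟩
    rw [Fintype.linearIndependent_iff]
    intro g hg
    have hsplit : ∑ k, g k • (b k + w k • v0)
        = (∑ k, g k • b k) + (∑ k, g k * w k) • v0 := by
      simp only [smul_add, smul_smul]
      rw [Finset.sum_add_distrib, Finset.sum_smul]
    rw [hsplit] at hg
    have h0 : (∑ k, g k * w k) = 0 := by
      have h1 := congrArg (phi c) hg
      rw [map_add, map_sum, map_smul] at h1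
      simp only [map_smul, hbkill, smul_eq_mul, mul_zero, Finset.sum_const_zero,
        hphiv0, mul_one, zero_add, map_zero] at h1
      exact h1
    rw [h0, zero_smul, add_zero] at hg
    exact (Fintype.linearIndependent_iff.mp hbLI) g hg
  let F : α × (Fin r → F2) → {b : Fin r → (Fin ℓ → F2) // LinearIndependent F2 b} :=
    fun p => ⟨fun k => p.1.1 k + p.2 k • v0, hLI p⟩
  have hinj : Function.Injective F := by
    rintro p q h
    have hfun : ∀ k, p.1.1 k + p.2 k • v0 = q.1.1 k + q.2 k • v0 := by
      intro k
      exact congrFun (congrArg Subtype.val h) k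
    have hw : p.2 = q.2 := by
      funext k
      have h2 := congrArg (phi c) (hfun k)
      rw [map_add, map_add, map_smul, map_smul, p.1.2.2, q.1.2.2, hphiv0] at h2
      simpa using h2
    have hb : p.1 = q.1 := by
      apply Subtype.ext
      funext k
      have h3 := hfun k
      rw [hw] at h3
      exact add_right_cancel h3
    exact Prod.ext hb hw
  have := Nat.card_le_card_of_injective F hinj
  rwa [Nat.card_prod, card_fun_r] at this

lemma card_C {ℓ i : ℕ} (hi : 1 ≤ i) (hiℓ : i ≤ ℓ) :
    Nat.card {c : Fin ℓ → F2 //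
      (∀ j : Fin ℓ, (j : ℕ) < i - 1 → c j = 0) ∧ c ⟨i - 1, by omega⟩ = 1} = 2 ^ (ℓ - i) := by
  have e2 : {j : Fin ℓ // i ≤ (j : ℕ)} ≃ Fin (ℓ - i) :=
    { toFun := fun j => ⟨(j.1 : ℕ) - i, by have := j.1.2; have := j.2; omega⟩
      invFun := fun k => ⟨⟨(k : ℕ) + i, by have := k.2; omega⟩, by simp⟩
      left_inv := fun j => by
        apply Subtype.ext
        apply Fin.ext
        have := j.2
        simp
        omega
      right_inv := fun k => by
        apply Fin.ext
        simp }
  have e1 : {c : Fin ℓ → F2 //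
      (∀ j : Fin ℓ, (j : ℕ) < i - 1 → c j = 0) ∧ c ⟨i - 1, by omega⟩ = 1}
      ≃ ({j : Fin ℓ // i ≤ (j : ℕ)} → F2) :=
    { toFun := fun c j => c.1 j.1
      invFun := fun d =>
        ⟨fun j => if h : i ≤ (j : ℕ) then d ⟨j, h⟩ else (if (j : ℕ) = i - 1 then 1 else 0),
          by
            intro j hj
            simp only [dif_neg (show ¬ i ≤ (j : ℕ) by omega)]
            rw [if_neg (by omega)],
          by
            simp only [dif_neg (show ¬ i ≤ i - 1 by omega :
              ¬ i ≤ ((⟨i - 1, by omega⟩ : Fin ℓ) : ℕ))]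
            rw [if_pos (by simp)]⟩
      left_inv := fun c => by
        apply Subtype.ext
        funext j
        by_cases h : i ≤ (j : ℕ)
        · simp only [dif_pos h]
        · simp only [dif_neg h]
          by_cases h2 : (j : ℕ) = i - 1
          · rw [if_pos h2]
            have : j = (⟨i - 1, by omega⟩ : Fin ℓ) := Fin.ext h2
            rw [this, c.2.2]
          · rw [if_neg h2]
            exact (c.2.1 j (by omega)).symm
      right_inv := fun d => by
        funext j
        simp only [dif_pos j.2] }
  rw [Nat.card_congr (e1.trans (Equiv.arrowCongr e2 (Equiv.refl F2))), card_fun_r]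

lemma union_bound {ℓ : ℕ} (i : ℕ) (hi : 1 ≤ i) (hiℓ : i ≤ ℓ) (r : ℕ) :
    Nat.card {b : Fin r → (Fin ℓ → F2) // LinearIndependent F2 b ∧
      ((Submodule.span F2 (Set.range b) : Set (Fin ℓ → F2)) ∩
        ((Ej ℓ i : Set (Fin ℓ → F2)) \ (Ej ℓ (i - 1) : Set (Fin ℓ → F2))) = ∅)} * 2 ^ r
    ≤ 2 ^ (ℓ - i) * Nat.card {b : Fin r → (Fin ℓ → F2) // LinearIndependent F2 b} := by
  classical
  set α := {b : Fin r → (Fin ℓ → F2) // LinearIndependent F2 b ∧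
      ((Submodule.span F2 (Set.range b) : Set (Fin ℓ → F2)) ∩
        ((Ej ℓ i : Set (Fin ℓ → F2)) \ (Ej ℓ (i - 1) : Set (Fin ℓ → F2))) = ∅)} with hα
  set C := {c : Fin ℓ → F2 //
      (∀ j : Fin ℓ, (j : ℕ) < i - 1 → c j = 0) ∧ c ⟨i - 1, by omega⟩ = 1} with hC
  set T : C → Type := fun c => {b : Fin r → (Fin ℓ → F2) //
      LinearIndependent F2 b ∧ ∀ k, phi c.1 (b k) = 0} with hT
  have hex : ∀ a : α, ∃ c : C, ∀ k, phi c.1 (a.1 k) = 0 := by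
    intro a
    obtain ⟨c, h1, h2, h3⟩ := exists_c hi hiℓ (Submodule.span F2 (Set.range a.1)) a.2.2
    exact ⟨⟨c, h1, h2⟩, fun k => h3 _ (Submodule.subset_span (Set.mem_range_self k))⟩
  let G : α → Σ c : C, T c := fun a =>
    ⟨Classical.choose (hex a), ⟨a.1, a.2.1, Classical.choose_spec (hex a)⟩⟩
  have hGinj : Function.Injective G := by
    intro x y h
    apply Subtype.ext
    exact congrArg (fun p : Σ c : C, T c => p.2.1) h
  have h1 : Nat.card α ≤ Nat.card (Σ c : C, T c) := Nat.card_le_card_of_injective G hGinj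
  have : Fintype C := Fintype.ofFinite C
  have : ∀ c : C, Fintype (T c) := fun c => Fintype.ofFinite _
  have h2 : Nat.card (Σ c : C, T c) = ∑ c : C, Nat.card (T c) := by
    rw [Nat.card_eq_fintype_card, Fintype.card_sigma]
    exact Finset.sum_congr rfl fun c _ => (Nat.card_eq_fintype_card).symm
  have h3 : ∀ c : C, Nat.card (T c) * 2 ^ r ≤
      Nat.card {b : Fin r → (Fin ℓ → F2) // LinearIndependent F2 b} := fun c =>
    inj_card r c.1 ⟨i - 1, by omega⟩ c.2.2
  calc Nat.card α * 2 ^ r ≤ (∑ c : C, Nat.card (T c)) * 2 ^ r := by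
        exact Nat.mul_le_mul_right _ (h2 ▸ h1)
    _ = ∑ c : C, Nat.card (T c) * 2 ^ r := Finset.sum_mul _ _ _
    _ ≤ ∑ _c : C, Nat.card {b : Fin r → (Fin ℓ → F2) // LinearIndependent F2 b} :=
        Finset.sum_le_sum fun c _ => h3 c
    _ = Nat.card C * Nat.card {b : Fin r → (Fin ℓ → F2) // LinearIndependent F2 b} := by
        rw [Finset.sum_const, Finset.card_univ, smul_eq_mul,
          Nat.card_eq_fintype_card (α := C)]
    _ = 2 ^ (ℓ - i) * Nat.card {b : Fin r → (Fin ℓ → F2) // LinearIndependent F2 b} := by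
        rw [hC, card_C hi hiℓ]

end Stmt14Aux

theorem stmt14 (ℓ i s : ℕ) (hℓ : 1 ≤ ℓ) (hi : 1 ≤ i) (hiℓ : i ≤ ℓ) (hs : s ≤ ℓ) :
    pis ℓ i s ≤ 2 * (2 / 3 : ℝ) ^ ((i : ℤ) - (s : ℤ) - 1) := by
  classical
  set A := Nat.card {R : Submodule (ZMod 2) (Fin ℓ → ZMod 2) //
      Module.finrank (ZMod 2) ↥R = ℓ - s ∧
      (R : Set (Fin ℓ → ZMod 2)) ∩ ((Ej ℓ i : Set (Fin ℓ → ZMod 2)) \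
        (Ej ℓ (i - 1) : Set (Fin ℓ → ZMod 2))) = ∅} with hA
  set D := Nat.card {R : Submodule (ZMod 2) (Fin ℓ → ZMod 2) //
      Module.finrank (ZMod 2) ↥R = ℓ - s} with hD
  have hpis : pis ℓ i s = (A : ℝ) / D := rfl
  have hDpos : 0 < D := by
    rw [hD]
    have : Nonempty {R : Submodule (ZMod 2) (Fin ℓ → ZMod 2) //
        Module.finrank (ZMod 2) ↥R = ℓ - s} :=
      ⟨⟨Ej ℓ (ℓ - s), Stmt14Aux.finrank_Ej (by omega)⟩⟩
    exact Nat.card_pos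
  have hAD : A ≤ D := by
    apply Nat.card_le_card_of_injective
      (fun x => (⟨x.1, x.2.1⟩ : {R : Submodule (ZMod 2) (Fin ℓ → ZMod 2) //
        Module.finrank (ZMod 2) ↥R = ℓ - s}))
    intro x y h
    apply Subtype.ext
    exact congrArg (fun z : {R : Submodule (ZMod 2) (Fin ℓ → ZMod 2) //
      Module.finrank (ZMod 2) ↥R = ℓ - s} => z.1) h
  by_cases hcase : i ≤ s + 1
  · -- vacuous case
    have h1 : pis ℓ i s ≤ 1 := by
      rw [hpis, div_le_one (by exact_mod_cast hDpos)]
      exact_mod_cast hAD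
    refine h1.trans ?_
    set n : ℕ := s + 1 - i with hn
    have hzz : ((i : ℤ) - (s : ℤ) - 1) = -(n : ℤ) := by omega
    rw [hzz, zpow_neg, zpow_natCast]
    have h2 : (2 / 3 : ℝ) ^ n ≤ 1 := pow_le_one₀ (by norm_num) (by norm_num)
    have h3 : (0 : ℝ) < (2 / 3 : ℝ) ^ n := by positivity
    have h4 : (1 : ℝ) ≤ ((2 / 3 : ℝ) ^ n)⁻¹ := (one_le_inv₀ h3).mpr h2
    linarith
  · -- main case
    push_neg at hcase
    have e1 : Nat.card {b : Fin (ℓ - s) → (Fin ℓ → ZMod 2) //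
        LinearIndependent (ZMod 2) b ∧
        ((Submodule.span (ZMod 2) (Set.range b) : Set (Fin ℓ → ZMod 2)) ∩
          ((Ej ℓ i : Set (Fin ℓ → ZMod 2)) \
            (Ej ℓ (i - 1) : Set (Fin ℓ → ZMod 2))) = ∅)}
        = A * Stmt14Aux.B (ℓ - s) :=
      Stmt14Aux.card_eq_mul (ℓ - s)
        (fun R : Submodule (ZMod 2) (Fin ℓ → ZMod 2) =>
          (R : Set (Fin ℓ → ZMod 2)) ∩ ((Ej ℓ i : Set (Fin ℓ → ZMod 2)) \
          (Ej ℓ (i - 1) : Set (Fin ℓ → ZMod 2))) = ∅)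
    have e2 : Nat.card {b : Fin (ℓ - s) → (Fin ℓ → ZMod 2) //
        LinearIndependent (ZMod 2) b} = D * Stmt14Aux.B (ℓ - s) := by
      have h0 := Stmt14Aux.card_eq_mul (ℓ := ℓ) (ℓ - s) (fun _ => True)
      have ha : Nat.card {b : Fin (ℓ - s) → (Fin ℓ → ZMod 2) //
          LinearIndependent (ZMod 2) b ∧ True}
          = Nat.card {b : Fin (ℓ - s) → (Fin ℓ → ZMod 2) //
            LinearIndependent (ZMod 2) b} :=
        Nat.card_congr (Equiv.subtypeEquivRight (by simp))
      have hb : Nat.card {R : Submodule (ZMod 2) (Fin ℓ → ZMod 2) //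
          Module.finrank (ZMod 2) ↥R = ℓ - s ∧ True} = D :=
        Nat.card_congr (Equiv.subtypeEquivRight (by simp))
      rw [ha, hb] at h0
      exact h0
    have hub := Stmt14Aux.union_bound i hi hiℓ (ℓ - s)
    rw [e1, e2] at hub
    have key : A * 2 ^ (ℓ - s) ≤ 2 ^ (ℓ - i) * D := by
      apply Nat.le_of_mul_le_mul_right ?_ (Stmt14Aux.B_pos (ℓ - s))
      calc A * 2 ^ (ℓ - s) * Stmt14Aux.B (ℓ - s)
          = A * Stmt14Aux.B (ℓ - s) * 2 ^ (ℓ - s) := by ring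
        _ ≤ 2 ^ (ℓ - i) * (D * Stmt14Aux.B (ℓ - s)) := hub
        _ = 2 ^ (ℓ - i) * D * Stmt14Aux.B (ℓ - s) := by ring
    have h5 : (A : ℝ) / D ≤ (2 : ℝ) ^ (ℓ - i) / 2 ^ (ℓ - s) := by
      rw [div_le_div_iff₀ (by exact_mod_cast hDpos) (by positivity)]
      exact_mod_cast key
    rw [hpis]
    refine h5.trans ?_
    set d : ℕ := i - s - 1 with hd
    have hz : ((i : ℤ) - (s : ℤ) - 1) = (d : ℤ) := by omega
    rw [hz, zpow_natCast]
    have hds : ℓ - s = (ℓ - i) + d + 1 := by omega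
    have hpow : (2 : ℝ) ^ (ℓ - s) = 2 ^ (ℓ - i) * 2 ^ (d + 1) := by
      rw [hds, pow_add, pow_add, pow_succ]
      ring
    have h6 : (2 : ℝ) ^ (ℓ - i) / 2 ^ (ℓ - s) = 1 / 2 ^ (d + 1) := by
      rw [hpow]
      have h2i : (2 : ℝ) ^ (ℓ - i) ≠ 0 := by positivity
      field_simp
    rw [h6]
    have h7 : (1 : ℝ) / 2 ^ (d + 1) = (1 / 2 : ℝ) ^ (d + 1) := by
      rw [div_pow, one_pow]
    have h8 : ((1 : ℝ) / 2) ^ (d + 1) ≤ (2 / 3 : ℝ) ^ (d + 1) :=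
      pow_le_pow_left₀ (by norm_num) (by norm_num) _
    have h9 : ((2 : ℝ) / 3) ^ (d + 1) ≤ (2 / 3 : ℝ) ^ d :=
      pow_le_pow_of_le_one (by norm_num) (by norm_num) (by omega)
    have h10 : (0 : ℝ) < (2 / 3 : ℝ) ^ d := by positivity
    rw [h7]
    linarith

end
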